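/- For every integer b ≥ 1 and every real κ > −1 it holds that ∑_{m=1}^{b} C(b+κ, b−m)·C(m−1+κ, m−1) / [C(b, m−1)·(b−m+1)] = C(b+κ, b) · ∑_{k=1}^{b} 1/(k+κ). Consequently, the limiting distribution of the initial bucket size, given by P{K=m} = C(b+κ, b−m)·C(m−1+κ, m−1)/[C(b,m−1)·(b−m+1)·C(b+κ,b)·(H_{b+κ}−H_κ)] for 1 ≤ m ≤ b, is a proper probability distribution; the case κ = 1/(d−1) corresponds to (b,d)-ary increasing trees, κ = −1/(α+1) to (b,α)-plane oriented recursive trees, and κ = 0 gives the Zipf law P{K=m} = 1/(m·H_b) for bucket recursive trees. -/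

import Mathlib

/-- The generalized binomial coefficient `C(x, n) = x(x-1)⋯(x-n+1)/n!`. -/
noncomputable def genBinom (x : ℝ) (n : ℕ) : ℝ :=
    (∏ i ∈ Finset.range n, (x - i)) / (n.factorial : ℝ)

private lemma key_prod (b : ℕ) (κ : ℝ) :
    ∀ m : ℕ, 1 ≤ m → m ≤ b →
      ((m : ℝ) + κ) * (∏ i ∈ Finset.range (b - m), ((b : ℝ) + κ - i)) *
        (∏ i ∈ Finset.range (m - 1), ((m : ℝ) - 1 + κ - i)) =
      ∏ i ∈ Finset.range b, ((b : ℝ) + κ - i) := by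
  intro m h1
  induction m, h1 using Nat.le_induction with
  | base =>
    intro hb
    have hc : ((b - 1 : ℕ) : ℝ) = (b : ℝ) - 1 := by
      push_cast [Nat.cast_sub hb]; ring
    have hsplit : ∏ i ∈ Finset.range b, ((b : ℝ) + κ - i)
        = (∏ i ∈ Finset.range (b - 1), ((b : ℝ) + κ - i)) * ((b : ℝ) + κ - ((b - 1 : ℕ) : ℝ)) := by
      rw [← Finset.prod_range_succ, show b - 1 + 1 = b from by omega]
    rw [hsplit, hc]
    simp
    ring
  | succ m hm ih =>
    intro hmb
    have hmb' : m ≤ b := by omega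
    have ih' := ih hmb'
    have h1 : b - m = (b - (m + 1)) + 1 := by omega
    have h2 : (m + 1 : ℕ) - 1 = (m - 1) + 1 := by omega
    rw [h1, Finset.prod_range_succ] at ih'
    rw [h2, Finset.prod_range_succ']
    have hc1 : ((b - (m + 1) : ℕ) : ℝ) = (b : ℝ) - m - 1 := by
      push_cast [Nat.cast_sub hmb]; ring
    have hc2 : ((m : ℝ) + 1) - 1 + κ - 0 = (m : ℝ) + κ := by ring
    have hc3 : ∀ i : ℕ, ((m : ℝ) + 1) - 1 + κ - ((i : ℝ) + 1) = (m : ℝ) - 1 + κ - i := by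
      intro i; ring
    rw [hc1] at ih'
    push_cast
    calc ((m : ℝ) + 1 + κ) * (∏ i ∈ Finset.range (b - (m + 1)), ((b : ℝ) + κ - i)) *
          ((∏ i ∈ Finset.range (m - 1), ((m : ℝ) + 1 - 1 + κ - (i + 1))) * ((m : ℝ) + 1 - 1 + κ - 0))
        = ((m : ℝ) + κ) * ((∏ i ∈ Finset.range (b - (m + 1)), ((b : ℝ) + κ - i)) *
            ((b : ℝ) + κ - ((b : ℝ) - m - 1))) *
          (∏ i ∈ Finset.range (m - 1), ((m : ℝ) - 1 + κ - i)) := by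
          rw [Finset.prod_congr rfl (fun i _ => hc3 i)]
          ring
      _ = _ := ih'

private lemma desc_prod (b : ℕ) : ∀ k : ℕ, k ≤ b →
    (∏ i ∈ Finset.range k, ((b : ℝ) - i)) * ((b - k).factorial : ℝ) = (b.factorial : ℝ) := by
  intro k
  induction k with
  | zero => simp
  | succ k ih =>
    intro hk
    have hk' : k ≤ b := by omega
    have ih' := ih hk'
    have h : b - k = (b - (k + 1)) + 1 := by omega
    rw [h, Nat.factorial_succ] at ih'
    rw [Finset.prod_range_succ]
    have hc : ((b - (k + 1) : ℕ) : ℝ) = (b : ℝ) - k - 1 := by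
      push_cast [Nat.cast_sub hk]; ring
    push_cast at ih' ⊢
    rw [hc] at ih'
    linear_combination ih'

private lemma term_eq (b : ℕ) (κ : ℝ) (hκ : -1 < κ) (m : ℕ) (h1 : 1 ≤ m) (h2 : m ≤ b) :
    genBinom ((b : ℝ) + κ) (b - m) * genBinom ((m : ℝ) - 1 + κ) (m - 1)
      / (genBinom (b : ℝ) (m - 1) * ((b : ℝ) - (m : ℝ) + 1))
    = genBinom ((b : ℝ) + κ) b * (1 / ((m : ℝ) + κ)) := by
  have hkey := key_prod b κ m h1 h2
  have hd := desc_prod b (m - 1) (by omega)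
  have hmk : (0 : ℝ) < (m : ℝ) + κ := by
    have : (1 : ℝ) ≤ (m : ℝ) := by exact_mod_cast h1
    linarith
  have hbm : (0 : ℝ) < (b : ℝ) - (m : ℝ) + 1 := by
    have : (m : ℝ) ≤ (b : ℝ) := by exact_mod_cast h2
    linarith
  have hfac : ((b - (m - 1)).factorial : ℝ) = ((b : ℝ) - (m : ℝ) + 1) * ((b - m).factorial : ℝ) := by
    have h : b - (m - 1) = (b - m) + 1 := by omega
    rw [h, Nat.factorial_succ]
    have hc : ((b - m : ℕ) : ℝ) = (b : ℝ) - m := by push_cast [Nat.cast_sub h2]; ring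
    push_cast
    rw [hc]
  rw [hfac] at hd
  unfold genBinom
  have hCval : (∏ i ∈ Finset.range (m - 1), ((b : ℝ) - i))
      = (b.factorial : ℝ) / (((b : ℝ) - (m : ℝ) + 1) * ((b - m).factorial : ℝ)) := by
    rw [eq_div_iff (mul_ne_zero (ne_of_gt hbm) (by positivity))]
    linear_combination hd
  rw [hCval, ← hkey]
  have f1 : ((b - m).factorial : ℝ) ≠ 0 := by positivity
  have f2 : ((m - 1).factorial : ℝ) ≠ 0 := by positivity
  have f3 : (b.factorial : ℝ) ≠ 0 := by positivity
  field_simp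

theorem initial_bucket_limit_law_is_probability (b : ℕ) (hb : 1 ≤ b) (κ : ℝ) (hκ : -1 < κ) :
    (∑ m ∈ Finset.Icc 1 b,
        genBinom ((b : ℝ) + κ) (b - m) * genBinom ((m : ℝ) - 1 + κ) (m - 1)
          / (genBinom (b : ℝ) (m - 1) * ((b : ℝ) - (m : ℝ) + 1))
      = genBinom ((b : ℝ) + κ) b * ∑ k ∈ Finset.Icc 1 b, 1 / ((k : ℝ) + κ)) ∧
    (∑ m ∈ Finset.Icc 1 b,
        genBinom ((b : ℝ) + κ) (b - m) * genBinom ((m : ℝ) - 1 + κ) (m - 1)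
          / (genBinom (b : ℝ) (m - 1) * ((b : ℝ) - (m : ℝ) + 1)
              * genBinom ((b : ℝ) + κ) b * ∑ k ∈ Finset.Icc 1 b, 1 / ((k : ℝ) + κ))
      = 1) := by
  set C := genBinom ((b : ℝ) + κ) b with hC
  set S := ∑ k ∈ Finset.Icc 1 b, 1 / ((k : ℝ) + κ) with hS
  have hCpos : 0 < C := by
    rw [hC]
    unfold genBinom
    apply div_pos
    · apply Finset.prod_pos
      intro i hi
      have hib : i + 1 ≤ b := Finset.mem_range.mp hi
      have : ((i : ℝ) + 1) ≤ (b : ℝ) := by exact_mod_cast hib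
      linarith
    · positivity
  have hSpos : 0 < S := by
    rw [hS]
    apply Finset.sum_pos
    · intro k hk
      have h1 : 1 ≤ k := (Finset.mem_Icc.mp hk).1
      have : (1 : ℝ) ≤ (k : ℝ) := by exact_mod_cast h1
      have : (0 : ℝ) < (k : ℝ) + κ := by linarith
      positivity
    · exact Finset.nonempty_Icc.mpr hb
  have hterm : ∀ m ∈ Finset.Icc 1 b,
      genBinom ((b : ℝ) + κ) (b - m) * genBinom ((m : ℝ) - 1 + κ) (m - 1)
        / (genBinom (b : ℝ) (m - 1) * ((b : ℝ) - (m : ℝ) + 1))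
      = C * (1 / ((m : ℝ) + κ)) := by
    intro m hm
    obtain ⟨h1, h2⟩ := Finset.mem_Icc.mp hm
    exact term_eq b κ hκ m h1 h2
  have part1 : ∑ m ∈ Finset.Icc 1 b,
      genBinom ((b : ℝ) + κ) (b - m) * genBinom ((m : ℝ) - 1 + κ) (m - 1)
        / (genBinom (b : ℝ) (m - 1) * ((b : ℝ) - (m : ℝ) + 1)) = C * S := by
    rw [Finset.sum_congr rfl hterm, ← Finset.mul_sum, hS]
  refine ⟨part1, ?_⟩
  have hterm2 : ∀ m ∈ Finset.Icc 1 b,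
      genBinom ((b : ℝ) + κ) (b - m) * genBinom ((m : ℝ) - 1 + κ) (m - 1)
        / (genBinom (b : ℝ) (m - 1) * ((b : ℝ) - (m : ℝ) + 1) * C * S)
      = (1 / ((m : ℝ) + κ)) / S := by
    intro m hm
    rw [← div_div, ← div_div, hterm m hm, mul_comm C, mul_div_assoc,
      div_self hCpos.ne', mul_one]
  rw [Finset.sum_congr rfl hterm2, ← Finset.sum_div, ← hS, div_self hSpos.ne']
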